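/- Let A be a nonempty finite set, P a probability distribution on A, L' : A → ℝ a function with ∑_{a∈A} 2^{-L'(a)} ≤ 2^{γ} for some γ ≥ 0, and λ > 0. Then ∑_{a∈A} P(a)·2^{λ L'(a)} ≥ 2^{-λγ} · (∑_{a∈A} P(a)^{1/(1+λ)})^{1+λ}. -/

import Mathlib

open Finset Real

theorem kraft_holder_core
    (A : Type*) [Fintype A] [Nonempty A]
    (P : A → ℝ) (hP : ∀ a, 0 ≤ P a) (hPsum : ∑ a, P a = 1)
    (L' : A → ℝ) (γ : ℝ) (hγ : 0 ≤ γ)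
    (hKraft : ∑ a, (2 : ℝ) ^ (-(L' a)) ≤ 2 ^ γ)
    (l : ℝ) (hl : 0 < l) :
    ∑ a, P a * (2 : ℝ) ^ (l * L' a) ≥
      (2 : ℝ) ^ (-(l * γ)) * (∑ a, (P a) ^ (1 / (1 + l))) ^ (1 + l) := by
  have hp1 : (0:ℝ) < 1 + l := by linarith
  set p : ℝ := 1 + l with hpdef
  set q : ℝ := (1 + l) / l with hqdef
  have hq0 : 0 < q := by positivity
  have hpne : p ≠ 0 := ne_of_gt hp1
  have hpq : p.HolderConjugate q := by
    rw [Real.holderConjugate_iff]; constructor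
    · rw [hpdef]; linarith
    · rw [hpdef, hqdef]; field_simp
  set f : A → ℝ := fun a => (P a * (2 : ℝ) ^ (l * L' a)) ^ (1 / p) with hf
  set g : A → ℝ := fun a => ((2 : ℝ) ^ (-(L' a))) ^ (1 / q) with hg
  have hfnn : ∀ a, 0 ≤ f a := fun a =>
    Real.rpow_nonneg (mul_nonneg (hP a) (Real.rpow_nonneg (by norm_num) _)) _
  have hgnn : ∀ a, 0 ≤ g a := fun a => by
    rw [hg]; positivity
  have hfg : ∀ a, f a * g a = (P a) ^ (1 / p) := by
    intro a
    rw [hf, hg]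
    simp only
    rw [Real.mul_rpow (hP a) (Real.rpow_nonneg (by norm_num) _), mul_assoc,
      ← Real.rpow_mul (by norm_num : (0:ℝ) ≤ 2), ← Real.rpow_mul (by norm_num : (0:ℝ) ≤ 2),
      ← Real.rpow_add (by norm_num : (0:ℝ) < 2)]
    have hz : l * L' a * (1 / p) + -L' a * (1 / q) = 0 := by
      rw [hpdef, hqdef]
      field_simp
      ring
    rw [hz, Real.rpow_zero, mul_one]
  have hfp : ∀ a, f a ^ p = P a * (2 : ℝ) ^ (l * L' a) := by
    intro a
    rw [hf]
    simp only
    rw [← Real.rpow_mul (mul_nonneg (hP a) (Real.rpow_nonneg (by norm_num) _)),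
      one_div_mul_cancel hpne, Real.rpow_one]
  have hgq : ∀ a, g a ^ q = (2 : ℝ) ^ (-(L' a)) := by
    intro a
    rw [hg]
    simp only
    rw [← Real.rpow_mul (by positivity), one_div_mul_cancel (ne_of_gt hq0), Real.rpow_one]
  set S : ℝ := ∑ a, P a * (2 : ℝ) ^ (l * L' a) with hSdef
  set K : ℝ := ∑ a, (2 : ℝ) ^ (-(L' a)) with hKdef
  have hS0 : 0 ≤ S := Finset.sum_nonneg fun a _ =>
    mul_nonneg (hP a) (Real.rpow_nonneg (by norm_num) _)
  have hK0 : 0 ≤ K := by rw [hKdef]; positivity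
  have hT0 : 0 ≤ ∑ a, (P a) ^ (1 / p) :=
    Finset.sum_nonneg fun a _ => Real.rpow_nonneg (hP a) _
  have hHolder : ∑ a, (P a) ^ (1 / p) ≤ S ^ (1 / p) * K ^ (1 / q) := by
    have h := Real.inner_le_Lp_mul_Lq_of_nonneg (s := Finset.univ) (f := f) (g := g) hpq
      (fun a _ => hfnn a) (fun a _ => hgnn a)
    simpa only [hfg, hfp, hgq, hSdef, hKdef] using h
  have hKq : K ^ (1 / q) ≤ ((2:ℝ) ^ γ) ^ (1 / q) :=
    Real.rpow_le_rpow hK0 hKraft (by positivity)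
  have h2 : ∑ a, (P a) ^ (1 / p) ≤ S ^ (1 / p) * ((2:ℝ) ^ γ) ^ (1 / q) := by
    refine hHolder.trans ?_
    exact mul_le_mul_of_nonneg_left hKq (Real.rpow_nonneg hS0 _)
  have key : (∑ a, (P a) ^ (1 / p)) ^ p ≤ (2:ℝ) ^ (l * γ) * S := by
    have h3 := Real.rpow_le_rpow hT0 h2 hp1.le
    refine h3.trans_eq ?_
    rw [Real.mul_rpow (Real.rpow_nonneg hS0 _) (Real.rpow_nonneg (by positivity) _),
      ← Real.rpow_mul hS0, one_div_mul_cancel hpne, Real.rpow_one,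
      ← Real.rpow_mul (by norm_num : (0:ℝ) ≤ 2),
      ← Real.rpow_mul (by norm_num : (0:ℝ) ≤ 2), mul_comm]
    congr 1
    rw [hpdef, hqdef]
    field_simp
  have h4 : (2:ℝ) ^ (-(l * γ)) * (∑ a, (P a) ^ (1 / p)) ^ p ≤ S := by
    calc (2:ℝ) ^ (-(l * γ)) * (∑ a, (P a) ^ (1 / p)) ^ p
        ≤ (2:ℝ) ^ (-(l * γ)) * ((2:ℝ) ^ (l * γ) * S) :=
          mul_le_mul_of_nonneg_left key (Real.rpow_nonneg (by norm_num) _)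
      _ = S := by
          rw [← mul_assoc, ← Real.rpow_add (by norm_num : (0:ℝ) < 2), neg_add_cancel,
            Real.rpow_zero, one_mul]
  exact h4
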